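/- Let X be a path-connected metric space with basepoint x₀ in which closed bounded sets are compact. If X has the loops-to-infinity property, then π₁^{cut}(X,δ,R,x₀) = π₁(X,x₀) for every δ > 0 and every R > 0; consequently CovSpec^R_cut(X,x₀) = ∅ for every R > 0. -/

import Mathlib

/- Common definitions: path length, length/geodesic spaces, δ-covering groups,
   covering spectra, cut-off covering groups and spectra, free homotopy,
   loops-to-infinity. -/

open Metric Filter
open scoped NNReal ENNReal unitInterval

attribute [local instance] Path.Homotopic.setoid

/-- The length (total variation) of a path in a metric space. -/
noncomputable def pathLength {X : Type*} [MetricSpace X] {x y : X} (γ : Path x y) : ℝ≥0∞ :=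
  eVariationOn γ Set.univ

/-- A metric space is a length space if the distance between any two points is the
infimum of the lengths of paths joining them. -/
def IsLengthSpace (X : Type*) [MetricSpace X] : Prop :=
  ∀ x y : X, ENNReal.ofReal (dist x y) = ⨅ γ : Path x y, pathLength γ

/-- A metric space is a geodesic space if any two points are joined by a
distance-realizing path. -/
def IsGeodesicSpace (X : Type*) [MetricSpace X] : Prop :=
  ∀ x y : X, ∃ γ : Path x y, pathLength γ = ENNReal.ofReal (dist x y)

/-- The element of the fundamental group at `p` represented by the loop
`α⁻¹ · β · α` (i.e. follow `α` from `p` to `y`, the loop `β` at `y`, then `α` back). -/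
noncomputable def loopClass {X : Type*} [TopologicalSpace X] {p y : X}
    (α : Path p y) (β : Path y y) : FundamentalGroup X p :=
  FundamentalGroup.fromPath (X := TopCat.of X) ⟦(α.trans β).trans α.symm⟧

/-- The δ-covering group `π₁(X, δ, p)`: the normal subgroup of `π₁(X,p)` generated by
classes of loops `α⁻¹·β·α` with `β` lying in some open ball of radius `δ`. -/
noncomputable def coveringGroup (X : Type*) [MetricSpace X] (p : X) (δ : ℝ) :
    Subgroup (FundamentalGroup X p) :=
  Subgroup.normalClosure
    {g | ∃ (y : X) (β : Path y y) (α : Path p y),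
      (∃ c : X, ∀ t, β t ∈ Metric.ball c δ) ∧ g = loopClass α β}

/-- The covering spectrum of `X` (with basepoint `p`). -/
def covSpec (X : Type*) [MetricSpace X] (p : X) : Set ℝ :=
  {δ | 0 < δ ∧ ∀ δ' > δ, coveringGroup X p δ' ≠ coveringGroup X p δ}

/-- The `R` cut-off δ-covering group `π₁^{cut}(X, δ, R, x)`: the normal subgroup of
`π₁(X,x)` generated by classes of loops `α⁻¹·β·α` with `β` lying in some open ball of
radius `δ` or in the complement of the closed ball `B̄(x,R)`. -/
noncomputable def cutCoveringGroup (X : Type*) [MetricSpace X] (x : X) (δ R : ℝ) :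
    Subgroup (FundamentalGroup X x) :=
  Subgroup.normalClosure
    {g | ∃ (y : X) (β : Path y y) (α : Path x y),
      ((∃ c : X, ∀ t, β t ∈ Metric.ball c δ) ∨ (∀ t, β t ∉ Metric.closedBall x R)) ∧
      g = loopClass α β}

/-- The `R` cut-off covering spectrum of `(X,x)`. -/
def cutCovSpec (X : Type*) [MetricSpace X] (x : X) (R : ℝ) : Set ℝ :=
  {δ | 0 < δ ∧ ∀ δ' > δ, cutCoveringGroup X x δ' R ≠ cutCoveringGroup X x δ R}

/-- Two loops are freely homotopic: there is a homotopy through (not necessarily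
based) loops from one to the other. -/
def FreelyHomotopic {X : Type*} [TopologicalSpace X] {a b : X}
    (γ₀ : Path a a) (γ₁ : Path b b) : Prop :=
  ∃ H : C(I × I, X),
    (∀ t, H (0, t) = γ₀ t) ∧ (∀ t, H (1, t) = γ₁ t) ∧ ∀ s, H (s, 0) = H (s, 1)

/-- Two loops are freely homotopic within a subset `A`: the homotopy stays in `A`. -/
def FreelyHomotopicIn {X : Type*} [TopologicalSpace X] (A : Set X) {a b : X}
    (γ₀ : Path a a) (γ₁ : Path b b) : Prop :=
  ∃ H : C(I × I, X),
    (∀ t, H (0, t) = γ₀ t) ∧ (∀ t, H (1, t) = γ₁ t) ∧ (∀ s, H (s, 0) = H (s, 1)) ∧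
    ∀ p, H p ∈ A

/-- A loop has the loops-to-infinity property: for every compact set it is freely
homotopic to a loop outside that set. -/
def LoopToInfinity {X : Type*} [TopologicalSpace X] {a : X} (γ : Path a a) : Prop :=
  ∀ K : Set X, IsCompact K →
    ∃ (b : X) (η : Path b b), (∀ t, η t ∉ K) ∧ FreelyHomotopic γ η

/-- A space has the loops-to-infinity property if all of its loops do. -/
def LoopsToInfinity (X : Type*) [TopologicalSpace X] : Prop :=
  ∀ (a : X) (γ : Path a a), LoopToInfinity γ

/-- Concatenation of a finite list of loops based at `q`. -/
noncomputable def loopConcat {X : Type*} [TopologicalSpace X] (q : X) :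
    List (Path q q) → Path q q
  | [] => Path.refl q
  | γ :: rest => γ.trans (loopConcat q rest)

/-- A space is semilocally simply connected if every point has a neighborhood in which
every loop is null-homotopic in the whole space. -/
def SemilocallySimplyConnected (X : Type*) [TopologicalSpace X] : Prop :=
  ∀ x : X, ∃ U ∈ nhds x, ∀ (y : X) (γ : Path y y), (∀ t, γ t ∈ U) →
    γ.Homotopic (Path.refl y)

/-- A pointed ε-Hausdorff approximation. -/
def IsPointedHausdorffApprox {Z₁ Z₂ : Type*} [MetricSpace Z₁] [MetricSpace Z₂]
    (f : Z₁ → Z₂) (p₁ : Z₁) (p₂ : Z₂) (ε : ℝ) : Prop :=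
  f p₁ = p₂ ∧ (∀ a b : Z₁, |dist (f a) (f b) - dist a b| < ε) ∧
    ∀ z : Z₂, ∃ a : Z₁, dist z (f a) ≤ ε

instance coveringGroup_normal (X : Type*) [MetricSpace X] (p : X) (δ : ℝ) :
    (coveringGroup X p δ).Normal :=
  Subgroup.normalClosure_normal

instance cutCoveringGroup_normal (X : Type*) [MetricSpace X] (x : X) (δ R : ℝ) :
    (cutCoveringGroup X x δ R).Normal :=
  Subgroup.normalClosure_normal
section LTIAux

open CategoryTheory unitInterval FundamentalGroupoid ContinuousMap.Homotopy
open scoped FundamentalGroupoid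

universe u

private lemma heq_quot_of_pointwise {Y : TopCat.{u}}
    (f : C(TopCat.of (ULift.{u} I), Y)) {c d : Y} (q : Path c d)
    (hq : ∀ t : I, f (ULift.up t) = q t) :
    HEq ((πₘ (TopCat.ofHom f)).map uhpath01)
      (⟦q⟧ : FundamentalGroupoid.fromTop c ⟶ FundamentalGroupoid.fromTop d) := by
  have h1 : (πₘ (TopCat.ofHom f)).map uhpath01 = ⟦upath01.map f.continuous⟧ := rfl
  rw [h1]
  exact Path.Homotopic.hpath_hext hq

private lemma freelyHomotopic_conj {X : Type u} [TopologicalSpace X] {a b : X}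
    (γ : Path a a) (η : Path b b) (hfh : FreelyHomotopic γ η) :
    ∃ α : Path a b,
      (⟦γ⟧ : Path.Homotopic.Quotient a a) = ⟦(α.trans η).trans α.symm⟧ := by
  obtain ⟨H, h0, h1, hloop⟩ := hfh
  let Y : TopCat.{u} := TopCat.of X
  let D : TopCat.{u} := TopCat.of (ULift.{u} I)
  let f : C(D, Y) := ⟨fun t => γ t.down, γ.continuous.comp continuous_uliftDown⟩
  let g : C(D, Y) := ⟨fun t => η t.down, η.continuous.comp continuous_uliftDown⟩
  let HH : f.Homotopy g :=
    { toFun := fun q => H (q.1, q.2.down)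
      continuous_toFun := H.continuous.comp (continuous_fst.prodMk
          (continuous_uliftDown.comp continuous_snd))
      map_zero_left := fun t => h0 t.down
      map_one_left := fun t => h1 t.down }
  let α : Path a b := (HH.evalAt (ULift.up 0)).cast
    (show a = f (ULift.up 0) from γ.source.symm)
    (show b = g (ULift.up 0) from η.source.symm)
  refine ⟨α, ?_⟩
  have ea0 : f (ULift.up 0) = a := γ.source
  have ea1 : f (ULift.up 1) = a := γ.target
  have eb0 : g (ULift.up 0) = b := η.source
  have eb1 : g (ULift.up 1) = b := η.target
  have key := (HH.eq_diag_path uhpath01).1.trans (HH.eq_diag_path uhpath01).2.symm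
  have hf : (πₘ (TopCat.ofHom f)).map uhpath01 =
      eqToHom (FundamentalGroupoid.ext ea0) ≫ (⟦γ⟧ : fromTop (X := Y) a ⟶ fromTop (X := Y) a) ≫
        eqToHom (FundamentalGroupoid.ext ea1.symm) :=
    by refine (conj_eqToHom_iff_heq' _ _ _ _).mpr ?_
       exact heq_quot_of_pointwise f γ fun _ => rfl
  have hg : (πₘ (TopCat.ofHom g)).map uhpath01 =
      eqToHom (FundamentalGroupoid.ext eb0) ≫ (⟦η⟧ : fromTop (X := Y) b ⟶ fromTop (X := Y) b) ≫
        eqToHom (FundamentalGroupoid.ext eb1.symm) :=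
    by refine (conj_eqToHom_iff_heq' _ _ _ _).mpr ?_
       exact heq_quot_of_pointwise g η fun _ => rfl
  have h0' : (⟦HH.evalAt (ULift.up 0)⟧ :
        fromTop (X := Y) (f (ULift.up 0)) ⟶ fromTop (X := Y) (g (ULift.up 0))) =
      eqToHom (FundamentalGroupoid.ext ea0) ≫ (⟦α⟧ : fromTop (X := Y) a ⟶ fromTop (X := Y) b) ≫
        eqToHom (FundamentalGroupoid.ext eb0.symm) :=
    by apply (conj_eqToHom_iff_heq' (C := FundamentalGroupoid Y)
         (⟦HH.evalAt (ULift.up 0)⟧) (⟦α⟧) (FundamentalGroupoid.ext ea0)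
         (FundamentalGroupoid.ext eb0.symm)).mpr
       exact Path.Homotopic.hpath_hext fun _ => rfl
  have h1' : (⟦HH.evalAt (ULift.up 1)⟧ :
        fromTop (X := Y) (f (ULift.up 1)) ⟶ fromTop (X := Y) (g (ULift.up 1))) =
      eqToHom (FundamentalGroupoid.ext ea1) ≫ (⟦α⟧ : fromTop (X := Y) a ⟶ fromTop (X := Y) b) ≫
        eqToHom (FundamentalGroupoid.ext eb1.symm) :=
    by apply (conj_eqToHom_iff_heq' (C := FundamentalGroupoid Y)
         (⟦HH.evalAt (ULift.up 1)⟧) (⟦α⟧) (FundamentalGroupoid.ext ea1)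
         (FundamentalGroupoid.ext eb1.symm)).mpr
       exact Path.Homotopic.hpath_hext fun t => (hloop t).symm
  rw [hf, hg, h0'] at key
  erw [h1'] at key
  simp only [Category.assoc, eqToHom_trans, eqToHom_refl, Category.id_comp] at key
  have key2 : Path.Homotopic.Quotient.trans (⟦γ⟧ : Path.Homotopic.Quotient a a)
      (⟦α⟧ : Path.Homotopic.Quotient a b) =
      Path.Homotopic.Quotient.trans (⟦α⟧ : Path.Homotopic.Quotient a b)
      (⟦η⟧ : Path.Homotopic.Quotient b b) := by
    have key' : (eqToHom (FundamentalGroupoid.ext ea0) ≫ (⟦γ⟧ : FundamentalGroupoid.mk (X := X) a ⟶ FundamentalGroupoid.mk (X := X) a) ≫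
        eqToHom (FundamentalGroupoid.ext ea1.symm)) ≫ (eqToHom (FundamentalGroupoid.ext ea1) ≫
        (⟦α⟧ : FundamentalGroupoid.mk (X := X) a ⟶ FundamentalGroupoid.mk (X := X) b) ≫ eqToHom (FundamentalGroupoid.ext eb1.symm)) =
        (eqToHom (FundamentalGroupoid.ext ea0) ≫ (⟦α⟧ : FundamentalGroupoid.mk (X := X) a ⟶ FundamentalGroupoid.mk (X := X) b) ≫
        eqToHom (FundamentalGroupoid.ext eb0.symm)) ≫ (eqToHom (FundamentalGroupoid.ext eb0) ≫
        (⟦η⟧ : FundamentalGroupoid.mk (X := X) b ⟶ FundamentalGroupoid.mk (X := X) b) ≫ eqToHom (FundamentalGroupoid.ext eb1.symm)) := key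
    have gen : ∀ {C : Type u} [Category.{u} C] {p0 p1 a' b' q0 q1 : C} (h0 : p0 = a') (h1 : p1 = a')
        (k0 : q0 = b') (k1 : q1 = b') (G : a' ⟶ a') (A : a' ⟶ b') (E : b' ⟶ b'),
        (eqToHom h0 ≫ G ≫ eqToHom h1.symm) ≫ (eqToHom h1 ≫ A ≫ eqToHom k1.symm) =
          (eqToHom h0 ≫ A ≫ eqToHom k0.symm) ≫ (eqToHom k0 ≫ E ≫ eqToHom k1.symm) →
        G ≫ A = A ≫ E := by
      intro C _ p0 p1 a' b' q0 q1 h0 h1 k0 k1 G A E hk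
      subst h0 h1 k0 k1
      simpa using hk
    exact gen (C := FundamentalGroupoid X) (FundamentalGroupoid.ext ea0) (FundamentalGroupoid.ext ea1)
      (FundamentalGroupoid.ext eb0) (FundamentalGroupoid.ext eb1) _ _ _ key'
  have key2' : (γ.trans α).Homotopic (α.trans η) := Quotient.exact key2
  have c1 : ((γ.trans α).trans α.symm).Homotopic (γ.trans (α.trans α.symm)) :=
    ⟨Path.Homotopy.transAssoc γ α α.symm⟩
  have c2 : (α.trans α.symm).Homotopic (Path.refl a) :=
    ⟨(Path.Homotopy.reflTransSymm α).symm⟩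
  have c3 : (γ.trans (α.trans α.symm)).Homotopic (γ.trans (Path.refl a)) :=
    (Path.Homotopic.refl γ).hcomp c2
  have c4 : (γ.trans (Path.refl a)).Homotopic γ := ⟨Path.Homotopy.transRefl γ⟩
  calc (⟦γ⟧ : Path.Homotopic.Quotient a a)
      = ⟦(γ.trans α).trans α.symm⟧ :=
        (Quotient.sound ((c1.trans c3).trans c4)).symm
    _ = ⟦(α.trans η).trans α.symm⟧ :=
        Quotient.sound (key2'.hcomp (Path.Homotopic.refl α.symm))

end LTIAux

/-- In a path-connected metric space in which closed bounded sets are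
compact, the loops-to-infinity property makes all `R` cut-off δ-covering groups equal
to the whole fundamental group, so all `R` cut-off covering spectra are empty. -/
theorem cutCoveringGroup_eq_top_of_loopsToInfinity
    {X : Type*} [MetricSpace X] [PathConnectedSpace X] [ProperSpace X] (x₀ : X)
    (h : LoopsToInfinity X) :
    (∀ δ : ℝ, 0 < δ → ∀ R : ℝ, 0 < R → cutCoveringGroup X x₀ δ R = ⊤) ∧
    (∀ R : ℝ, 0 < R → cutCovSpec X x₀ R = ∅) := by
  have main : ∀ δ : ℝ, 0 < δ → ∀ R : ℝ, 0 < R → cutCoveringGroup X x₀ δ R = ⊤ := by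
    intro δ hδ R hR
    rw [eq_top_iff]
    rintro g -
    obtain ⟨γ, hγ⟩ := Quotient.exists_rep (FundamentalGroup.toPath (X := TopCat.of X) g)
    obtain ⟨b, η, hout, hfh⟩ := h x₀ γ (Metric.closedBall x₀ R) (isCompact_closedBall x₀ R)
    obtain ⟨α, hconj⟩ := freelyHomotopic_conj γ η hfh
    have hg : g = loopClass α η := by
      show FundamentalGroup.toPath (X := TopCat.of X) g = _
      rw [← hγ, hconj]
      rfl
    rw [hg]
    exact Subgroup.subset_normalClosure ⟨b, η, α, Or.inr hout, rfl⟩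
  refine ⟨main, ?_⟩
  intro R hR
  ext δ
  simp only [cutCovSpec, Set.mem_setOf_eq, Set.mem_empty_iff_false, iff_false, not_and]
  rintro hδ hne
  exact hne (δ + 1) (by linarith)
    (by rw [main (δ + 1) (by linarith) R hR, main δ hδ R hR])
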